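/- Let f : X → ℝ be differentiable, monotone, and DR-submodular on a box X ⊆ ℝ₊ⁿ. Then for any x, x* ∈ X, f(x*) - f(x) ≤ ⟨∇f(x), x*⟩. (This uses nonnegativity of the gradient of a monotone function and concavity along nonnegative directions.) -/

import Mathlib

open RealInnerProductSpace Set Filter Topology

/-- For monotone DR-submodular `f` on a box in the positive orthant:
`f(x*) - f(x) ≤ ⟨∇f(x), x*⟩`. -/
theorem drSubmodular_gap_bounded_by_inner_with_opt
    {n : ℕ} (b : EuclideanSpace ℝ (Fin n)) (hb : ∀ i, 0 ≤ b i)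
    (X : Set (EuclideanSpace ℝ (Fin n)))
    (hX : X = {y : EuclideanSpace ℝ (Fin n) | ∀ i, y i ∈ Set.Icc 0 (b i)})
    (f : EuclideanSpace ℝ (Fin n) → ℝ)
    (hf : Differentiable ℝ f)
    (hmono : ∀ x ∈ X, ∀ y ∈ X, (∀ i, x i ≤ y i) → f x ≤ f y)
    (hDR : ∀ x ∈ X, ∀ y ∈ X, (∀ i, x i ≤ y i) →
      ∀ i, gradient f y i ≤ gradient f x i) :
    ∀ x ∈ X, ∀ xstar ∈ X, f xstar - f x ≤ ⟪gradient f x, xstar⟫ := by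
  subst hX
  -- derivative along a line
  have hline : ∀ (p v : EuclideanSpace ℝ (Fin n)) (t : ℝ),
      HasDerivAt (fun s => f (p + s • v)) ⟪gradient f (p + t • v), v⟫ t := by
    intro p v t
    have h1 : HasDerivAt (fun s : ℝ => p + s • v) v t := by
      simpa using ((hasDerivAt_id t).smul_const v).const_add p
    have h2 := ((hf (p + t • v)).hasGradientAt.hasFDerivAt).comp_hasDerivAt t h1
    have h3 : HasDerivAt (fun s => f (p + s • v)) _ t := h2
    simpa using h3
  -- gradient is nonnegative on X in coordinates where the box is nondegenerate
  have hgradnn : ∀ p ∈ {y : EuclideanSpace ℝ (Fin n) | ∀ i, y i ∈ Set.Icc 0 (b i)},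
      ∀ i, 0 < b i → 0 ≤ gradient f p i := by
    intro p hp i hbi
    set e : EuclideanSpace ℝ (Fin n) := EuclideanSpace.single i (1:ℝ) with he
    have hinner : ⟪gradient f p, e⟫ = gradient f p i := by
      rw [real_inner_comm, he, EuclideanSpace.inner_single_left]; simp
    have hd : HasDerivAt (fun s => f (p + s • e)) (gradient f p i) (0:ℝ) := by
      have := hline p e 0
      rwa [zero_smul, add_zero, hinner] at this
    have hslope := hasDerivAt_iff_tendsto_slope.mp hd
    have hcoord : ∀ t : ℝ, ∀ j, (p + t • e) j = if j = i then p i + t else p j := by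
      intro t j
      have h0 : (p + t • e) j = p j + t * e j := by
        simp [PiLp.add_apply, PiLp.smul_apply, smul_eq_mul]
      rw [h0, he]
      by_cases h : j = i
      · subst h; simp [EuclideanSpace.single_apply]
      · simp [h, EuclideanSpace.single_apply]
    have hmem : ∀ t : ℝ, 0 ≤ p i + t → p i + t ≤ b i →
        (p + t • e) ∈ {y : EuclideanSpace ℝ (Fin n) | ∀ j, y j ∈ Set.Icc 0 (b j)} := by
      intro t h1 h2 j
      rw [hcoord t j]
      by_cases h : j = i
      · subst h; simp [h1, h2]
      · simp [h]; exact hp j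
    rcases lt_or_ge (p i) (b i) with hlt | hge
    · -- right limit
      have hF : 𝓝[>] (0:ℝ) ≤ 𝓝[≠] (0:ℝ) :=
        nhdsWithin_mono 0 (fun t ht => ne_of_gt ht)
      refine ge_of_tendsto (hslope.mono_left hF) ?_
      · filter_upwards [Ioo_mem_nhdsGT_of_mem
          (Set.mem_Ico.mpr ⟨le_refl 0, sub_pos.mpr hlt⟩)] with t ht
        obtain ⟨ht0, ht1⟩ := ht
        have hmemt := hmem t (by linarith [(hp i).1]) (by linarith)
        have hle : f (p + (0:ℝ) • e) ≤ f (p + t • e) := by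
          refine hmono _ (by simpa using hp) _ hmemt fun j => ?_
          rw [hcoord 0 j, hcoord t j]
          by_cases h : j = i <;> simp [h] <;> linarith
        have : slope (fun s => f (p + s • e)) 0 t
            = (f (p + t • e) - f (p + (0:ℝ) • e)) / t := by
          simp [slope_def_field]
        rw [this]
        exact div_nonneg (by linarith) ht0.le
    · -- p i = b i > 0, left limit
      have hpi : 0 < p i := lt_of_lt_of_le hbi hge
      have hF : 𝓝[<] (0:ℝ) ≤ 𝓝[≠] (0:ℝ) :=
        nhdsWithin_mono 0 (fun t ht => ne_of_lt ht)
      refine ge_of_tendsto (hslope.mono_left hF) ?_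
      · filter_upwards [Ioo_mem_nhdsLT_of_mem
          (Set.mem_Ioc.mpr ⟨neg_lt_zero.mpr hpi, le_refl 0⟩)] with t ht
        obtain ⟨ht0, ht1⟩ := ht
        have hmemt := hmem t (by linarith) (by linarith [(hp i).2])
        have hle : f (p + t • e) ≤ f (p + (0:ℝ) • e) := by
          refine hmono _ hmemt _ (by simpa using hp) fun j => ?_
          rw [hcoord 0 j, hcoord t j]
          by_cases h : j = i <;> simp [h] <;> linarith
        have : slope (fun s => f (p + s • e)) 0 t
            = (f (p + t • e) - f (p + (0:ℝ) • e)) / t := by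
          simp [slope_def_field]
        rw [this]
        have := div_nonneg (neg_nonneg.mpr (by linarith : f (p + t • e) - f (p + (0:ℝ) • e) ≤ 0)) (neg_nonneg.mpr ht1.le)
        rwa [neg_div_neg_eq] at this
  intro x hx xstar hxs
  -- z = componentwise max
  set z : EuclideanSpace ℝ (Fin n) := WithLp.toLp 2 (fun i => max (x i) (xstar i)) with hzdef
  have hz : z ∈ {y : EuclideanSpace ℝ (Fin n) | ∀ i, y i ∈ Set.Icc 0 (b i)} := by
    intro i
    exact ⟨le_max_of_le_left (hx i).1, max_le (hx i).2 (hxs i).2⟩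
  set v : EuclideanSpace ℝ (Fin n) := z - x with hvdef
  have hv : ∀ i, v i = max (x i) (xstar i) - x i := fun i => by
    simp [hvdef, hzdef, PiLp.sub_apply]
  have hvnn : ∀ i, 0 ≤ v i := fun i => by
    rw [hv i]; simp [le_max_left]
  have hcoord : ∀ t : ℝ, ∀ i, (x + t • v) i = x i + t * v i := fun t i => by
    simp [PiLp.add_apply, PiLp.smul_apply, smul_eq_mul]
  have hseg : ∀ t ∈ Set.Icc (0:ℝ) 1,
      (x + t • v) ∈ {y : EuclideanSpace ℝ (Fin n) | ∀ i, y i ∈ Set.Icc 0 (b i)} := by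
    intro t ht i
    rw [hcoord t i]
    constructor
    · have := mul_nonneg ht.1 (hvnn i)
      linarith [(hx i).1]
    · have h1 : t * v i ≤ v i := by
        nlinarith [hvnn i, ht.1, ht.2]
      have h2 : x i + v i ≤ b i := by
        rw [hv i]
        have := (hz i).2
        simp only [hzdef] at this ⊢
        linarith
      linarith
  have hsegle : ∀ t ∈ Set.Icc (0:ℝ) 1, ∀ i, x i ≤ (x + t • v) i := by
    intro t ht i
    rw [hcoord t i]
    nlinarith [mul_nonneg ht.1 (hvnn i)]
  -- MVT
  obtain ⟨c, hc, hceq⟩ := exists_hasDerivAt_eq_slope (fun s => f (x + s • v))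
    (fun t => ⟪gradient f (x + t • v), v⟫) zero_lt_one
    (Continuous.continuousOn (hf.continuous.comp (continuous_const.add (continuous_id.smul continuous_const))))
    (fun t _ => hline x v t)
  have hc01 : c ∈ Set.Icc (0:ℝ) 1 := ⟨hc.1.le, hc.2.le⟩
  have hz1 : x + (1:ℝ) • v = z := by
    rw [one_smul, hvdef]; abel
  have hz0 : x + (0:ℝ) • v = x := by rw [zero_smul, add_zero]
  rw [hz1, hz0] at hceq
  simp only [sub_zero, div_one] at hceq
  -- concavity step: ⟪∇f(x+cv), v⟫ ≤ ⟪∇f(x), v⟫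
  have hDRc := hDR x hx (x + c • v) (hseg c hc01) (hsegle c hc01)
  have hstep1 : f z - f x ≤ ⟪gradient f x, v⟫ := by
    rw [← hceq]
    rw [PiLp.inner_apply, PiLp.inner_apply]
    apply Finset.sum_le_sum
    intro i _
    simp only [RCLike.inner_apply, conj_trivial]
    exact mul_le_mul_of_nonneg_left (hDRc i) (hvnn i)
  have hstep2 : ⟪gradient f x, v⟫ ≤ ⟪gradient f x, xstar⟫ := by
    rw [PiLp.inner_apply, PiLp.inner_apply]
    apply Finset.sum_le_sum
    intro i _
    simp only [RCLike.inner_apply, conj_trivial]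
    rcases lt_or_ge 0 (b i) with hbi | hbi
    · refine mul_le_mul_of_nonneg_right ?_ (hgradnn x hx i hbi)
      rw [hv i]
      have := (hx i).1
      have := (hxs i).1
      rcases max_cases (x i) (xstar i) with ⟨h1, _⟩ | ⟨h1, _⟩ <;> rw [h1] <;> linarith
    · have hbi0 : b i = 0 := le_antisymm hbi (hb i)
      have hxi : x i = 0 := le_antisymm (by simpa [hbi0] using (hx i).2) (hx i).1
      have hxsi : xstar i = 0 := le_antisymm (by simpa [hbi0] using (hxs i).2) (hxs i).1
      rw [hv i, hxi, hxsi]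
      simp
  have hmxs : f xstar ≤ f z :=
    hmono xstar hxs z hz fun i => le_max_right _ _
  linarith
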